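/- Every I-stable set S ⊆ ℤ² containing {(0,0),(0,1),(1,0)} contains the point (−1,−1), and also contains {(3,−1),(−1,3),(4,1),(1,−4),(4,0),(5,0)}; in particular S contains the translate {(0,0),(1,0),(0,1),(−1,−1)} + (4,0). -/

import Mathlib

/-- Embed a lattice point into the plane. -/
def toR (p : ℤ × ℤ) : ℝ × ℝ := ((p.1 : ℝ), (p.2 : ℝ))

/-- Determinant of the 2×2 matrix with columns `u`, `v`. -/
def det2 (u v : ℤ × ℤ) : ℤ := u.1 * v.2 - u.2 * v.1

/-- The set of lattice points in the (closed) triangle with vertices `a b c`. -/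
def triPts (a b c : ℤ × ℤ) : Set (ℤ × ℤ) :=
  {p | toR p ∈ convexHull ℝ {toR a, toR b, toR c}}

/-- A border triangle: a lattice triangle with exactly 4 lattice points, whose
fourth point lies on the boundary (not in the interior). -/
def IsBorderTri (T : Set (ℤ × ℤ)) : Prop :=
  ∃ a b c d : ℤ × ℤ, det2 (b - a) (c - a) ≠ 0 ∧
    T = triPts a b c ∧ T = {a, b, c, d} ∧ T.ncard = 4 ∧
    toR d ∉ interior (convexHull ℝ {toR a, toR b, toR c})

/-- An internal triangle: a lattice triangle with exactly 4 lattice points, whose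
fourth point lies in the interior. -/
def IsInternalTri (T : Set (ℤ × ℤ)) : Prop :=
  ∃ a b c d : ℤ × ℤ, det2 (b - a) (c - a) ≠ 0 ∧
    T = triPts a b c ∧ T = {a, b, c, d} ∧ T.ncard = 4 ∧
    toR d ∈ interior (convexHull ℝ {toR a, toR b, toR c})

/-- `S` is B-stable: no border triangle has exactly three of its points in `S`. -/
def BStable (S : Set (ℤ × ℤ)) : Prop :=
  ∀ T, IsBorderTri T → (T ∩ S).ncard ≠ 3

/-- `S` is I-stable: no internal triangle has exactly three of its points in `S`. -/
def IStable (S : Set (ℤ × ℤ)) : Prop :=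
  ∀ T, IsInternalTri T → (T ∩ S).ncard ≠ 3

/-- Upper density of a subset of `ℤ²`. -/
noncomputable def upperDensity (S : Set (ℤ × ℤ)) : ℝ :=
  Filter.limsup (fun n : ℕ =>
    ((S ∩ Set.Icc (-(n : ℤ), -(n : ℤ)) ((n : ℤ), (n : ℤ))).ncard : ℝ) /
      (2 * (n : ℝ) + 1) ^ 2) Filter.atTop



def rdet (u v : ℝ × ℝ) : ℝ := u.1 * v.2 - u.2 * v.1

lemma rdet_key (A B C x : ℝ × ℝ) :
    rdet (C-B) (x-B) • A + rdet (A-C) (x-C) • B + rdet (B-A) (x-A) • C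
      = rdet (B-A) (C-A) • x := by
  apply Prod.ext <;> simp [rdet, Prod.smul_fst, Prod.smul_snd, smul_eq_mul] <;> ring

lemma rdet_sum (A B C x : ℝ × ℝ) :
    rdet (C-B) (x-B) + rdet (A-C) (x-C) + rdet (B-A) (x-A) = rdet (B-A) (C-A) := by
  simp [rdet]; ring

lemma halfspace_convex (α β γ : ℝ) : Convex ℝ {x : ℝ × ℝ | 0 ≤ α * x.1 + β * x.2 + γ} := by
  intro x hx y hy a b ha hb hab
  simp only [Set.mem_setOf_eq] at *
  have h1 : (a • x + b • y).1 = a * x.1 + b * y.1 := by simp [Prod.smul_fst, smul_eq_mul]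
  have h2 : (a • x + b • y).2 = a * x.2 + b * y.2 := by simp [Prod.smul_snd, smul_eq_mul]
  rw [h1, h2]
  have key : α * (a * x.1 + b * y.1) + β * (a * x.2 + b * y.2) + γ
      = a * (α * x.1 + β * x.2 + γ) + b * (α * y.1 + β * y.2 + γ) := by
    linear_combination (-γ) * hab
  rw [key]
  exact add_nonneg (mul_nonneg ha hx) (mul_nonneg hb hy)

lemma hull_edge (A B C x : ℝ × ℝ) (P Q : ℝ × ℝ)
    (hA : 0 ≤ rdet (Q-P) (A-P)) (hB : 0 ≤ rdet (Q-P) (B-P)) (hC : 0 ≤ rdet (Q-P) (C-P))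
    (hx : x ∈ convexHull ℝ {A, B, C}) : 0 ≤ rdet (Q-P) (x-P) := by
  have hsub : convexHull ℝ {A, B, C} ⊆
      {y : ℝ × ℝ | 0 ≤ (-(Q-P).2) * y.1 + (Q-P).1 * y.2 + ((Q-P).2 * P.1 - (Q-P).1 * P.2)} := by
    apply convexHull_min _ (halfspace_convex _ _ _)
    intro y hy
    simp only [Set.mem_insert_iff, Set.mem_singleton_iff] at hy
    simp only [rdet, Prod.fst_sub, Prod.snd_sub] at hA hB hC
    rcases hy with rfl | rfl | rfl <;>
      · simp only [Set.mem_setOf_eq, Prod.fst_sub, Prod.snd_sub]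
        ring_nf at hA hB hC ⊢
        linarith
  have := hsub hx
  simp only [Set.mem_setOf_eq] at this
  simp only [rdet, Prod.fst_sub, Prod.snd_sub] at this ⊢
  ring_nf at this ⊢
  linarith

lemma mem_hull_of (A B C x : ℝ × ℝ) (hD : 0 < rdet (B-A) (C-A))
    (h1 : 0 ≤ rdet (C-B) (x-B)) (h2 : 0 ≤ rdet (A-C) (x-C)) (h3 : 0 ≤ rdet (B-A) (x-A)) :
    x ∈ convexHull ℝ {A, B, C} := by
  have hsum := rdet_sum A B C x
  have hkey := rdet_key A B C x
  set w : Fin 3 → ℝ := ![rdet (C-B) (x-B), rdet (A-C) (x-C), rdet (B-A) (x-A)] with hw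
  set z : Fin 3 → ℝ × ℝ := ![A, B, C] with hz
  have hmem := Finset.centerMass_mem_convexHull (t := Finset.univ) (w := w) (z := z)
      (s := ({A, B, C} : Set (ℝ × ℝ)))
      (by intro i _; fin_cases i <;> simp [hw, h1, h2, h3])
      (by rw [Fin.sum_univ_three]; simp only [hw]; simp; linarith [hsum, hD])
      (by intro i _; fin_cases i <;> simp [hz])
  have heq : Finset.univ.centerMass w z = x := by
    rw [Finset.centerMass, Fin.sum_univ_three, Fin.sum_univ_three]
    simp only [hw, hz]
    simp only [Matrix.cons_val_zero, Matrix.cons_val_one, Matrix.head_cons,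
      Matrix.cons_val_two, Matrix.tail_cons]
    rw [hsum, hkey, smul_smul, inv_mul_cancel₀ hD.ne', one_smul]
  rwa [heq] at hmem

lemma mem_hull_iff (A B C x : ℝ × ℝ) (hD : 0 < rdet (B-A) (C-A)) :
    x ∈ convexHull ℝ {A, B, C} ↔
      0 ≤ rdet (C-B) (x-B) ∧ 0 ≤ rdet (A-C) (x-C) ∧ 0 ≤ rdet (B-A) (x-A) := by
  have hD' := hD
  simp only [rdet, Prod.fst_sub, Prod.snd_sub] at hD'
  constructor
  · intro hx
    refine ⟨hull_edge A B C x B C ?_ ?_ ?_ hx, hull_edge A B C x C A ?_ ?_ ?_ hx,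
      hull_edge A B C x A B ?_ ?_ ?_ hx⟩ <;>
      · simp only [rdet, Prod.fst_sub, Prod.snd_sub]
        ring_nf at hD' ⊢
        linarith
  · rintro ⟨h1, h2, h3⟩; exact mem_hull_of A B C x hD h1 h2 h3

lemma mem_interior_hull_of (A B C x : ℝ × ℝ) (hD : 0 < rdet (B-A) (C-A))
    (h1 : 0 < rdet (C-B) (x-B)) (h2 : 0 < rdet (A-C) (x-C)) (h3 : 0 < rdet (B-A) (x-A)) :
    x ∈ interior (convexHull ℝ {A, B, C}) := by
  have hopen : IsOpen {y : ℝ × ℝ | 0 < rdet (C-B) (y-B) ∧ 0 < rdet (A-C) (y-C) ∧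
      0 < rdet (B-A) (y-A)} := by
    have c : ∀ P Q : ℝ × ℝ, Continuous (fun y : ℝ × ℝ => rdet (Q-P) (y-P)) := by
      intro P Q
      simp only [rdet, Prod.fst_sub, Prod.snd_sub]
      fun_prop
    have : {y : ℝ × ℝ | 0 < rdet (C-B) (y-B) ∧ 0 < rdet (A-C) (y-C) ∧ 0 < rdet (B-A) (y-A)}
        = {y | 0 < rdet (C-B) (y-B)} ∩ ({y | 0 < rdet (A-C) (y-C)} ∩ {y | 0 < rdet (B-A) (y-A)}) := by
      ext y; simp only [Set.mem_inter_iff, Set.mem_setOf_eq, and_assoc]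
    rw [this]
    exact (isOpen_lt continuous_const (c B C)).inter
      ((isOpen_lt continuous_const (c C A)).inter (isOpen_lt continuous_const (c A B)))
  apply interior_maximal ?_ hopen ⟨h1, h2, h3⟩
  intro y ⟨g1, g2, g3⟩
  exact mem_hull_of A B C y hD g1.le g2.le g3.le

lemma toR_sub (p q : ℤ × ℤ) : toR p - toR q = toR (p - q) := by
  apply Prod.ext <;> simp [toR]

lemma rdet_toR (u v : ℤ × ℤ) : rdet (toR u) (toR v) = (det2 u v : ℝ) := by
  simp [rdet, toR, det2]

lemma rdet_toR_sub (u v w s : ℤ × ℤ) :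
    rdet (toR u - toR v) (toR w - toR s) = (det2 (u - v) (w - s) : ℝ) := by
  rw [toR_sub, toR_sub, rdet_toR]

lemma triPts_char (a b c p : ℤ × ℤ) (hD : 0 < det2 (b - a) (c - a)) :
    p ∈ triPts a b c ↔
      0 ≤ det2 (c - b) (p - b) ∧ 0 ≤ det2 (a - c) (p - c) ∧ 0 ≤ det2 (b - a) (p - a) := by
  have hD' : (0 : ℝ) < rdet (toR b - toR a) (toR c - toR a) := by
    rw [rdet_toR_sub]; exact_mod_cast hD
  simp only [triPts, Set.mem_setOf_eq]
  rw [mem_hull_iff _ _ _ _ hD', rdet_toR_sub, rdet_toR_sub, rdet_toR_sub]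
  simp only [Int.cast_nonneg_iff]

lemma mkInternal (v1 v2 v3 ctr : ℤ × ℤ) (hD : 0 < det2 (v2 - v1) (v3 - v1))
    (hset : ∀ p : ℤ × ℤ,
      (0 ≤ det2 (v3 - v2) (p - v2) ∧ 0 ≤ det2 (v1 - v3) (p - v3) ∧
        0 ≤ det2 (v2 - v1) (p - v1)) ↔ p ∈ ({v1, v2, v3, ctr} : Set (ℤ × ℤ)))
    (hcard : ({v1, v2, v3, ctr} : Set (ℤ × ℤ)).ncard = 4)
    (h1 : 0 < det2 (v3 - v2) (ctr - v2)) (h2 : 0 < det2 (v1 - v3) (ctr - v3))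
    (h3 : 0 < det2 (v2 - v1) (ctr - v1)) :
    IsInternalTri {v1, v2, v3, ctr} := by
  have htri : ({v1, v2, v3, ctr} : Set (ℤ × ℤ)) = triPts v1 v2 v3 := by
    ext p; rw [triPts_char _ _ _ _ hD]; exact (hset p).symm
  refine ⟨v1, v2, v3, ctr, hD.ne', htri, rfl, hcard, ?_⟩
  apply mem_interior_hull_of
  · rw [rdet_toR_sub]; exact_mod_cast hD
  · rw [rdet_toR_sub]; exact_mod_cast h1
  · rw [rdet_toR_sub]; exact_mod_cast h2
  · rw [rdet_toR_sub]; exact_mod_cast h3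

lemma step (S : Set (ℤ × ℤ)) (hS : IStable S) (T : Set (ℤ × ℤ)) (a b c d : ℤ × ℤ)
    (hT : IsInternalTri T) (hTeq : T = {a, b, c, d})
    (h3 : ({a, b, c} : Finset (ℤ × ℤ)).card = 3)
    (ha : a ∈ S) (hb : b ∈ S) (hc : c ∈ S) : d ∈ S := by
  by_contra hd
  apply hS T hT
  have hInt : T ∩ S = {a, b, c} := by
    rw [hTeq]
    ext p
    constructor
    · rintro ⟨hp, hpS⟩
      simp only [Set.mem_insert_iff, Set.mem_singleton_iff] at hp ⊢
      rcases hp with rfl | rfl | rfl | rfl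
      · left; rfl
      · right; left; rfl
      · right; right; rfl
      · exact absurd hpS hd
    · intro hp
      simp only [Set.mem_insert_iff, Set.mem_singleton_iff] at hp
      rcases hp with rfl | rfl | rfl
      · exact ⟨by simp, ha⟩
      · exact ⟨by simp, hb⟩
      · exact ⟨by simp, hc⟩
  rw [hInt, show ({a, b, c} : Set (ℤ × ℤ)) = (↑({a, b, c} : Finset (ℤ × ℤ))) from by simp,
    Set.ncard_coe_finset, h3]

lemma ncard4 (a b c d : ℤ × ℤ) (h : ({a, b, c, d} : Finset (ℤ × ℤ)).card = 4) :
    ({a, b, c, d} : Set (ℤ × ℤ)).ncard = 4 := by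
  rw [show ({a, b, c, d} : Set (ℤ × ℤ)) = (↑({a, b, c, d} : Finset (ℤ × ℤ))) from by simp,
    Set.ncard_coe_finset, h]

theorem stmt16 (S : Set (ℤ × ℤ)) (hS : IStable S)
    (h : ({((0 : ℤ), (0 : ℤ)), (0, 1), (1, 0)} : Set (ℤ × ℤ)) ⊆ S) :
    ((-1, -1) : ℤ × ℤ) ∈ S ∧ ((3, -1) : ℤ × ℤ) ∈ S ∧ ((-1, 3) : ℤ × ℤ) ∈ S ∧
    ((4, 1) : ℤ × ℤ) ∈ S ∧ ((1, -4) : ℤ × ℤ) ∈ S ∧ ((4, 0) : ℤ × ℤ) ∈ S ∧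
    ((5, 0) : ℤ × ℤ) ∈ S ∧
    ((fun p : ℤ × ℤ => p + (4, 0)) ''
      ({(0, 0), (1, 0), (0, 1), (-1, -1)} : Set (ℤ × ℤ))) ⊆ S := by
  have h00 : ((0, 0) : ℤ × ℤ) ∈ S := h (by simp)
  have h01 : ((0, 1) : ℤ × ℤ) ∈ S := h (by simp)
  have h10 : ((1, 0) : ℤ × ℤ) ∈ S := h (by simp)
  have T1 : IsInternalTri {(1, 0), (0, 1), (-1, -1), ((0 : ℤ), (0 : ℤ))} :=
    mkInternal _ _ _ _ (by decide)
      (by rintro ⟨x, y⟩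
          simp only [det2, Set.mem_insert_iff, Set.mem_singleton_iff, Prod.ext_iff,
            Prod.fst_sub, Prod.snd_sub]
          constructor
          · rintro ⟨h1, h2, h3⟩
            have hx1 : (-1 : ℤ) ≤ x := by omega
            have hx2 : x ≤ 1 := by omega
            interval_cases x <;> omega
          · intro hp
            omega)
      (ncard4 _ _ _ _ (by decide)) (by decide) (by decide) (by decide)
  have hm11 : ((-1, -1) : ℤ × ℤ) ∈ S :=
    step S hS _ (0, 0) (1, 0) (0, 1) (-1, -1) T1 (by ext p; simp; tauto) (by decide) h00 h10 h01
  have T2 : IsInternalTri {(0, 0), (3, -1), (0, 1), ((1 : ℤ), (0 : ℤ))} :=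
    mkInternal _ _ _ _ (by decide)
      (by rintro ⟨x, y⟩
          simp only [det2, Set.mem_insert_iff, Set.mem_singleton_iff, Prod.ext_iff,
            Prod.fst_sub, Prod.snd_sub]
          constructor
          · rintro ⟨h1, h2, h3⟩
            have hx1 : (0 : ℤ) ≤ x := by omega
            have hx2 : x ≤ 3 := by omega
            interval_cases x <;> omega
          · intro hp
            omega)
      (ncard4 _ _ _ _ (by decide)) (by decide) (by decide) (by decide)
  have h3m1 : ((3, -1) : ℤ × ℤ) ∈ S :=
    step S hS _ (0, 0) (0, 1) (1, 0) (3, -1) T2 (by ext p; simp; tauto) (by decide) h00 h01 h10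
  have T3 : IsInternalTri {(0, 0), (1, 0), (-1, 3), ((0 : ℤ), (1 : ℤ))} :=
    mkInternal _ _ _ _ (by decide)
      (by rintro ⟨x, y⟩
          simp only [det2, Set.mem_insert_iff, Set.mem_singleton_iff, Prod.ext_iff,
            Prod.fst_sub, Prod.snd_sub]
          constructor
          · rintro ⟨h1, h2, h3⟩
            have hx1 : (-1 : ℤ) ≤ x := by omega
            have hx2 : x ≤ 1 := by omega
            interval_cases x <;> omega
          · intro hp
            omega)
      (ncard4 _ _ _ _ (by decide)) (by decide) (by decide) (by decide)
  have hm13 : ((-1, 3) : ℤ × ℤ) ∈ S :=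
    step S hS _ (0, 0) (1, 0) (0, 1) (-1, 3) T3 (by ext p; simp; tauto) (by decide) h00 h10 h01
  have T4 : IsInternalTri {(0, 0), (-1, -1), (4, 1), ((1 : ℤ), (0 : ℤ))} :=
    mkInternal _ _ _ _ (by decide)
      (by rintro ⟨x, y⟩
          simp only [det2, Set.mem_insert_iff, Set.mem_singleton_iff, Prod.ext_iff,
            Prod.fst_sub, Prod.snd_sub]
          constructor
          · rintro ⟨h1, h2, h3⟩
            have hx1 : (-1 : ℤ) ≤ x := by omega
            have hx2 : x ≤ 4 := by omega
            interval_cases x <;> omega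
          · intro hp
            omega)
      (ncard4 _ _ _ _ (by decide)) (by decide) (by decide) (by decide)
  have h41 : ((4, 1) : ℤ × ℤ) ∈ S :=
    step S hS _ (0, 0) (-1, -1) (1, 0) (4, 1) T4 (by ext p; simp; tauto) (by decide) h00 hm11 h10
  have T5 : IsInternalTri {(0, 1), (-1, 3), (1, -4), ((0 : ℤ), (0 : ℤ))} :=
    mkInternal _ _ _ _ (by decide)
      (by rintro ⟨x, y⟩
          simp only [det2, Set.mem_insert_iff, Set.mem_singleton_iff, Prod.ext_iff,
            Prod.fst_sub, Prod.snd_sub]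
          constructor
          · rintro ⟨h1, h2, h3⟩
            have hx1 : (-1 : ℤ) ≤ x := by omega
            have hx2 : x ≤ 1 := by omega
            interval_cases x <;> omega
          · intro hp
            omega)
      (ncard4 _ _ _ _ (by decide)) (by decide) (by decide) (by decide)
  have h1m4 : ((1, -4) : ℤ × ℤ) ∈ S :=
    step S hS _ (0, 1) (-1, 3) (0, 0) (1, -4) T5 (by ext p; simp; tauto) (by decide) h01 hm13 h00
  have T6 : IsInternalTri {(1, -4), (4, 0), (4, 1), ((3 : ℤ), (-1 : ℤ))} :=
    mkInternal _ _ _ _ (by decide)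
      (by rintro ⟨x, y⟩
          simp only [det2, Set.mem_insert_iff, Set.mem_singleton_iff, Prod.ext_iff,
            Prod.fst_sub, Prod.snd_sub]
          constructor
          · rintro ⟨h1, h2, h3⟩
            have hx1 : (1 : ℤ) ≤ x := by omega
            have hx2 : x ≤ 4 := by omega
            interval_cases x <;> omega
          · intro hp
            omega)
      (ncard4 _ _ _ _ (by decide)) (by decide) (by decide) (by decide)
  have h40 : ((4, 0) : ℤ × ℤ) ∈ S :=
    step S hS _ (1, -4) (4, 1) (3, -1) (4, 0) T6 (by ext p; simp; tauto) (by decide) h1m4 h41 h3m1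
  have T7 : IsInternalTri {(3, -1), (5, 0), (4, 1), ((4 : ℤ), (0 : ℤ))} :=
    mkInternal _ _ _ _ (by decide)
      (by rintro ⟨x, y⟩
          simp only [det2, Set.mem_insert_iff, Set.mem_singleton_iff, Prod.ext_iff,
            Prod.fst_sub, Prod.snd_sub]
          constructor
          · rintro ⟨h1, h2, h3⟩
            have hx1 : (3 : ℤ) ≤ x := by omega
            have hx2 : x ≤ 5 := by omega
            interval_cases x <;> omega
          · intro hp
            omega)
      (ncard4 _ _ _ _ (by decide)) (by decide) (by decide) (by decide)
  have h50 : ((5, 0) : ℤ × ℤ) ∈ S :=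
    step S hS _ (3, -1) (4, 1) (4, 0) (5, 0) T7 (by ext p; simp; tauto) (by decide) h3m1 h41 h40
  refine ⟨hm11, h3m1, hm13, h41, h1m4, h40, h50, ?_⟩
  rintro q ⟨p, hp, rfl⟩
  simp only [Set.mem_insert_iff, Set.mem_singleton_iff] at hp
  rcases hp with rfl | rfl | rfl | rfl
  · exact h40
  · exact h50
  · exact h41
  · exact h3m1
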